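/- Let p be a prime, s ≥ 1, n ≥ 1, F_q a finite field of characteristic p, γ ∈ F_q nonzero with x^n + γ irreducible over F_q, and let k, τ, i be integers with 1 ≤ k ≤ s-1, 1 ≤ τ ≤ p-1, and p^s - p^{s-k} + (τ-1)p^{s-k-1} + 1 ≤ i ≤ p^s - p^{s-k} + τ p^{s-k-1}. Then the minimum Hamming distance of the ideal C = ⟨(x^n + γ)^i⟩ in F_q[x]/⟨(x^n + γ)^{p^s}⟩ equals (τ+1)p^k. -/

import Mathlib

open Polynomial Finset

def Wd (p t : ℕ) : ℕ := ((Nat.digits p t).map (· + 1)).prod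

lemma Wd_zero (p : ℕ) : Wd p 0 = 1 := by simp [Wd]

lemma Wd_rec {p : ℕ} (hp : 1 < p) (t : ℕ) : Wd p t = (t % p + 1) * Wd p (t / p) := by
  rcases Nat.eq_zero_or_pos t with rfl | ht
  · simp [Wd]
  · rw [Wd, Nat.digits_def' hp ht]; simp [Wd]

lemma Wd_pos {p : ℕ} (hp : 1 < p) (t : ℕ) : 0 < Wd p t := by
  induction t using Nat.strong_induction_on with
  | _ t ih =>
    rcases Nat.eq_zero_or_pos t with rfl | ht
    · simp [Wd_zero]
    · rw [Wd_rec hp]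
      exact Nat.mul_pos (Nat.succ_pos _) (ih _ (Nat.div_lt_self ht hp))

lemma Wd_ge_two {p : ℕ} (hp : 1 < p) : ∀ {t : ℕ}, 1 ≤ t → 2 ≤ Wd p t := by
  intro t
  induction t using Nat.strong_induction_on with
  | _ t ih =>
    intro ht
    rw [Wd_rec hp]
    rcases Nat.eq_zero_or_pos (t % p) with h | h
    · have htp : 1 ≤ t / p := by
        have : p ∣ t := Nat.dvd_of_mod_eq_zero h
        have : p ≤ t := Nat.le_of_dvd ht this
        exact (Nat.one_le_div_iff (by omega)).2 this
      have h2 := ih (t / p) (Nat.div_lt_self ht hp) htp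
      calc 2 ≤ 1 * Wd p (t / p) := by omega
        _ ≤ (t % p + 1) * Wd p (t / p) := Nat.mul_le_mul_right _ (by omega)
    · have h2 := Wd_pos hp (t / p)
      calc 2 ≤ (t % p + 1) * 1 := by omega
        _ ≤ (t % p + 1) * Wd p (t / p) := Nat.mul_le_mul_left _ h2

lemma Wd_split {p : ℕ} (hp : 1 < p) (m : ℕ) : ∀ a b : ℕ, a < p ^ m →
    Wd p (a + b * p ^ m) = Wd p a * Wd p b := by
  induction m with
  | zero =>
    intro a b ha
    simp only [pow_zero, Nat.lt_one_iff] at ha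
    subst ha
    simp [Wd_zero]
  | succ m ih =>
    intro a b ha
    have hp0 : 0 < p := by omega
    rw [Wd_rec hp (a + b * p ^ (m+1)), Wd_rec hp a]
    have h1 : (a + b * p ^ (m+1)) % p = a % p := by
      rw [pow_succ, ← mul_assoc, Nat.add_mul_mod_self_right]
    have h2 : (a + b * p ^ (m+1)) / p = a / p + b * p ^ m := by
      rw [pow_succ, ← mul_assoc, Nat.add_mul_div_right _ _ hp0]
    have h3 : a / p < p ^ m := Nat.div_lt_of_lt_mul (by rwa [← pow_succ'])
    rw [h1, h2, ih (a / p) b h3, mul_assoc]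

lemma Wd_lt {p : ℕ} (hp : 1 < p) {a : ℕ} (ha : a < p) : Wd p a = a + 1 := by
  rw [Wd_rec hp, Nat.mod_eq_of_lt ha, Nat.div_eq_of_lt ha, Wd_zero, mul_one]

lemma Wd_pow_sub_one {p : ℕ} (hp : 1 < p) (k : ℕ) : Wd p (p ^ k - 1) = p ^ k := by
  induction k with
  | zero => simp [Wd_zero]
  | succ k ih =>
    have h1 : 1 ≤ p ^ k := Nat.one_le_pow _ _ (by omega)
    have hps : p ^ (k+1) = p ^ k * p := by ring
    have h : p ^ (k+1) - 1 = (p - 1) + (p ^ k - 1) * p ^ 1 := by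
      rw [pow_one, hps]
      have h3 : p ≤ p ^ k * p := Nat.le_mul_of_pos_left p h1
      have h4 : (p ^ k - 1) * p = p ^ k * p - 1 * p := Nat.sub_mul _ _ _
      omega
    rw [h, Wd_split hp 1 _ _ (by simpa using Nat.sub_lt (by omega) one_pos), ih,
      Wd_lt hp (by omega)]
    have h6 : p - 1 + 1 = p := by omega
    rw [h6, hps, mul_comm]

lemma not_dvd_choose_small {p r a : ℕ} (hp : p.Prime) (hr : r < p) (ha : a ≤ r) :
    ¬ p ∣ r.choose a := by
  intro hd
  have h2 : r.choose a * (a.factorial * (r - a).factorial) = r.factorial := by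
    rw [← mul_assoc]; exact Nat.choose_mul_factorial_mul_factorial ha
  have h3 : p ∣ r.factorial := h2 ▸ Dvd.dvd.mul_right hd _
  exact absurd ((Nat.Prime.dvd_factorial hp).mp h3) (by omega)

lemma dvd_iff_of_modEq {p a b : ℕ} (h : a ≡ b [MOD p]) : p ∣ a ↔ p ∣ b := by
  rw [Nat.dvd_iff_mod_eq_zero, Nat.dvd_iff_mod_eq_zero, h]

lemma lucas_dvd_iff {p : ℕ} (hp : p.Prime) (I j : ℕ) :
    p ∣ I.choose j ↔ p ∣ (I % p).choose (j % p) ∨ p ∣ (I / p).choose (j / p) := by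
  haveI : Fact p.Prime := ⟨hp⟩
  rw [dvd_iff_of_modEq (Choose.choose_modEq_choose_mod_mul_choose_div_nat),
    Nat.Prime.dvd_mul hp]

lemma card_choose {p : ℕ} (hp : p.Prime) : ∀ I : ℕ,
    ((range (I+1)).filter fun j => ¬ p ∣ I.choose j).card = Wd p I := by
  intro I
  induction I using Nat.strong_induction_on with
  | _ I ih =>
    have hp1 : 1 < p := hp.one_lt
    rcases Nat.lt_or_ge I p with hI | hI
    · rw [filter_true_of_mem (fun j hj => not_dvd_choose_small hp hI (by
        rw [mem_range] at hj; omega)), card_range,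
        Wd_lt hp1 hI]
    · have hq : I / p < I := Nat.div_lt_self (by omega) hp1
      have heq : (range (I+1)).filter (fun j => ¬ p ∣ I.choose j) =
          ((range (I % p + 1)) ×ˢ ((range (I / p + 1)).filter fun b => ¬ p ∣ (I / p).choose b)).image
            (fun ab => ab.1 + p * ab.2) := by
        ext j
        constructor
        · intro hj
          rw [mem_filter, mem_range] at hj
          obtain ⟨hj1, hd⟩ := hj
          rw [lucas_dvd_iff hp] at hd
          push_neg at hd
          obtain ⟨hd1, hd2⟩ := hd
          have h1 : j % p ≤ I % p := by
            by_contra h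
            have hc : (I % p).choose (j % p) = 0 := Nat.choose_eq_zero_of_lt (by omega)
            exact hd1 (hc ▸ dvd_zero p)
          have h2 : j / p ≤ I / p := by
            by_contra h
            have hc : (I / p).choose (j / p) = 0 := Nat.choose_eq_zero_of_lt (by omega)
            exact hd2 (hc ▸ dvd_zero p)
          refine mem_image.mpr ⟨(j % p, j / p), ?_, Nat.mod_add_div j p⟩
          exact mem_product.mpr ⟨mem_range.mpr (by omega),
            mem_filter.mpr ⟨mem_range.mpr (by omega), hd2⟩⟩
        · intro hj
          obtain ⟨⟨a, b⟩, hab, hj⟩ := mem_image.mp hj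
          dsimp only at hj
          obtain ⟨ha, hb⟩ := mem_product.mp hab
          dsimp only at ha hb
          rw [mem_range] at ha
          obtain ⟨hb1, hd2⟩ := mem_filter.mp hb
          rw [mem_range] at hb1
          have hIp : I % p < p := Nat.mod_lt _ (by omega)
          have hap : a < p := by omega
          have hmod : (a + p * b) % p = a := by
            rw [Nat.add_mul_mod_self_left, Nat.mod_eq_of_lt hap]
          have hdivv : (a + p * b) / p = b := by
            rw [Nat.add_mul_div_left _ _ (by omega : 0 < p), Nat.div_eq_of_lt hap, zero_add]
          rw [mem_filter, mem_range]
          constructor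
          · have h1 := Nat.mod_add_div I p
            have h2 : p * b ≤ p * (I / p) := Nat.mul_le_mul_left p (by omega)
            omega
          · rw [← hj, lucas_dvd_iff hp, hmod, hdivv]
            push_neg
            exact ⟨not_dvd_choose_small hp hIp (by omega), hd2⟩
      have hinj : Set.InjOn (fun ab : ℕ × ℕ => ab.1 + p * ab.2)
          (((range (I % p + 1)) ×ˢ ((range (I / p + 1)).filter fun b => ¬ p ∣ (I / p).choose b) :
            Finset (ℕ × ℕ)) : Set (ℕ × ℕ)) := by
        rintro ⟨a1, b1⟩ h1 ⟨a2, b2⟩ h2 h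
        rw [Finset.mem_coe] at h1 h2
        obtain ⟨ha1, _⟩ := mem_product.mp h1
        obtain ⟨ha2, _⟩ := mem_product.mp h2
        dsimp only at ha1 ha2
        rw [mem_range] at ha1 ha2
        have hIp : I % p < p := Nat.mod_lt _ (by omega)
        have h' : a1 + p * b1 = a2 + p * b2 := h
        have ha : a1 = a2 := by
          have e1 : (a1 + p * b1) % p = a1 := by
            rw [Nat.add_mul_mod_self_left, Nat.mod_eq_of_lt (by omega)]
          have e2 : (a2 + p * b2) % p = a2 := by
            rw [Nat.add_mul_mod_self_left, Nat.mod_eq_of_lt (by omega)]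
          rw [← e1, ← e2, h']
        have hb : b1 = b2 := by
          have h'' : p * b1 = p * b2 := by omega
          exact Nat.eq_of_mul_eq_mul_left (by omega) h''
        simp [ha, hb]
      rw [heq, card_image_of_injOn hinj, card_product, card_range, ih _ hq, Wd_rec hp1 I]

lemma wt_X_add_C_pow {p : ℕ} (hp : p.Prime) {F : Type*} [Field F] [CharP F p]
    {γ : F} (hγ : γ ≠ 0) (I : ℕ) :
    (((X : F[X]) + C γ) ^ I).support.card = Wd p I := by
  have hsupp : (((X : F[X]) + C γ) ^ I).support
      = (range (I+1)).filter fun j => ¬ p ∣ I.choose j := by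
    ext j
    simp only [mem_support_iff, coeff_X_add_C_pow, mem_filter, mem_range]
    constructor
    · intro h
      have hj : j ≤ I := by
        by_contra hj
        exact h (by rw [Nat.choose_eq_zero_of_lt (by omega)]; simp)
      refine ⟨by omega, fun hd => h ?_⟩
      rw [(CharP.cast_eq_zero_iff F p _).mpr hd, mul_zero]
    · rintro ⟨hj, hd⟩
      exact mul_ne_zero (pow_ne_zero _ hγ) (fun h => hd ((CharP.cast_eq_zero_iff F p _).mp h))
  rw [hsupp, card_choose hp]

lemma support_expand_card {F : Type*} [Field F] {n : ℕ} (hn : 0 < n) (f : F[X]) :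
    (expand F n f).support.card = f.support.card := by
  have hsupp : (expand F n f).support = f.support.image (fun k => n * k) := by
    ext m
    simp only [mem_support_iff, coeff_expand hn, mem_image]
    constructor
    · intro h
      split_ifs at h with hdvd
      · exact ⟨m / n, by simpa using h, Nat.mul_div_cancel' hdvd⟩
      · exact absurd rfl h
    · rintro ⟨k, hk, rfl⟩
      rw [if_pos (dvd_mul_right n k), Nat.mul_div_cancel_left _ hn]
      exact hk
  rw [hsupp, card_image_of_injective _ (fun a b h => Nat.eq_of_mul_eq_mul_left hn h)]

section Psl
variable {F : Type*} [Field F] {n : ℕ}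

lemma resid_eq {n r1 r2 k1 k2 : ℕ} (h1 : r1 < n) (h2 : r2 < n)
    (he : r1 + n * k1 = r2 + n * k2) : r1 = r2 ∧ k1 = k2 := by
  rcases lt_trichotomy k1 k2 with h3 | h3 | h3
  · have h4 : n * (k1+1) ≤ n * k2 := Nat.mul_le_mul_left n (by omega)
    rw [Nat.mul_add, mul_one] at h4
    omega
  · subst h3; omega
  · have h4 : n * (k2+1) ≤ n * k1 := Nat.mul_le_mul_left n (by omega)
    rw [Nat.mul_add, mul_one] at h4
    omega

noncomputable def psl (F : Type*) [Field F] (n r : ℕ) (h : F[X]) : F[X] :=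
  ∑ k ∈ range (h.natDegree + 1), C (h.coeff (r + n * k)) * X ^ k

lemma psl_coeff (hn : 0 < n) (h : F[X]) (r k : ℕ) :
    (psl F n r h).coeff k = h.coeff (r + n * k) := by
  rw [psl, finset_sum_coeff]
  rcases Nat.lt_or_ge k (h.natDegree + 1) with hk | hk
  · rw [Finset.sum_eq_single k]
    · simp
    · intro b _ hb
      simp [coeff_C_mul, coeff_X_pow, Ne.symm hb]
    · intro hk'
      exact absurd (mem_range.mpr hk) hk'
  · have h1 : ∀ b ∈ range (h.natDegree + 1), (C (h.coeff (r + n * b)) * X ^ b).coeff k = 0 := by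
      intro b hb
      rw [mem_range] at hb
      simp only [coeff_C_mul, coeff_X_pow, if_neg (by omega : ¬ k = b), mul_zero]
    rw [Finset.sum_eq_zero h1]
    have h2 : h.natDegree < r + n * k := by
      have : k ≤ n * k := Nat.le_mul_of_pos_left _ hn
      omega
    rw [coeff_eq_zero_of_natDegree_lt h2]

lemma sum_expand_coeff (hn : 0 < n) (G : ℕ → F[X]) {r : ℕ} (k : ℕ) (hr : r < n) :
    (∑ r' ∈ range n, expand F n (G r') * X ^ r').coeff (r + n * k) = (G r).coeff k := by
  rw [finset_sum_coeff]
  rw [Finset.sum_eq_single r]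
  · rw [coeff_mul_X_pow', if_pos (by omega)]
    have he : r + n * k - r = n * k := by omega
    rw [he, coeff_expand hn, if_pos (dvd_mul_right _ _), Nat.mul_div_cancel_left _ hn]
  · intro b hb hbr
    rw [mem_range] at hb
    rw [coeff_mul_X_pow']
    split_ifs with h1
    · rw [coeff_expand hn]
      split_ifs with h2
      · exfalso
        obtain ⟨d, hd⟩ := h2
        rcases lt_trichotomy d k with h3 | h3 | h3
        · have h4 : n * (d+1) ≤ n * k := Nat.mul_le_mul_left n (by omega)
          rw [Nat.mul_add, mul_one] at h4
          omega
        · subst h3; omega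
        · have h4 : n * (k+1) ≤ n * d := Nat.mul_le_mul_left n (by omega)
          rw [Nat.mul_add, mul_one] at h4
          omega
      · rfl
    · rfl
  · intro h; exact absurd (mem_range.mpr hr) h

lemma psl_sum (hn : 0 < n) (h : F[X]) :
    ∑ r ∈ range n, expand F n (psl F n r h) * X ^ r = h := by
  ext m
  have hmn : m % n < n := Nat.mod_lt _ hn
  have key := sum_expand_coeff hn (fun r => psl F n r h) (m / n) hmn
  rw [psl_coeff hn, Nat.mod_add_div] at key
  rw [show m = m % n + n * (m / n) from (Nat.mod_add_div m n).symm] at key ⊢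
  rw [key]

lemma psl_mem_support (hn : 0 < n) (h : F[X]) {r k : ℕ}
    (hk : k ∈ (psl F n r h).support) : r + n * k ∈ h.support := by
  rw [mem_support_iff] at hk ⊢
  rwa [psl_coeff hn] at hk

lemma psl_card_sum (hn : 0 < n) (h : F[X]) :
    ∑ r ∈ range n, (psl F n r h).support.card ≤ h.support.card := by
  classical
  have hinj : ∀ r : ℕ, Function.Injective fun k => r + n * k := by
    intro r a b hab
    simp only at hab
    exact Nat.eq_of_mul_eq_mul_left hn (by omega)
  calc ∑ r ∈ range n, (psl F n r h).support.card
      = ∑ r ∈ range n, ((psl F n r h).support.image fun k => r + n * k).card :=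
        Finset.sum_congr rfl fun r _ => (card_image_of_injective _ (hinj r)).symm
    _ = ((range n).biUnion fun r => (psl F n r h).support.image fun k => r + n * k).card := by
        refine (Finset.card_biUnion ?_).symm
        intro r1 h1 r2 h2 h12
        rw [coe_range, Set.mem_Iio] at h1 h2
        rw [Function.onFun, Finset.disjoint_left]
        intro m hm1 hm2
        obtain ⟨k1, _, hk1⟩ := mem_image.mp hm1
        obtain ⟨k2, _, hk2⟩ := mem_image.mp hm2
        exact h12 (resid_eq (k1 := k1) (k2 := k2) h1 h2 (by omega)).1
    _ ≤ h.support.card := by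
        refine card_le_card ?_
        intro m hm
        obtain ⟨r, hr, hm⟩ := mem_biUnion.mp hm
        obtain ⟨k, hk, rfl⟩ := mem_image.mp hm
        exact psl_mem_support hn h hk

lemma exists_psl_ne_zero (hn : 0 < n) {h : F[X]} (h0 : h ≠ 0) :
    ∃ r < n, psl F n r h ≠ 0 := by
  obtain ⟨m, hm⟩ : ∃ m, h.coeff m ≠ 0 := by
    by_contra hc
    push_neg at hc
    exact h0 (Polynomial.ext fun m => by simp [hc])
  refine ⟨m % n, Nat.mod_lt _ hn, fun hz => hm ?_⟩
  have := psl_coeff hn h (m % n) (m / n)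
  rw [hz, Nat.mod_add_div] at this
  simpa using this.symm

lemma psl_natDegree_le (hn : 0 < n) {h : F[X]} {r : ℕ} (hs : psl F n r h ≠ 0) :
    n * (psl F n r h).natDegree ≤ h.natDegree := by
  have hk : (psl F n r h).natDegree ∈ (psl F n r h).support := natDegree_mem_support_of_nonzero hs
  have := psl_mem_support hn h hk
  have hle := le_natDegree_of_mem_supp _ this
  omega


lemma psl_card_le {F : Type*} [Field F] {n : ℕ} (hn : 0 < n) (h : Polynomial F) (r : ℕ) :
    (psl F n r h).support.card ≤ h.support.card := by
  refine Finset.card_le_card_of_injOn (fun k => r + n * k)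
    (fun k hk => psl_mem_support hn h hk) ?_
  intro a _ b _ hab
  simp only at hab
  exact Nat.eq_of_mul_eq_mul_left hn (by omega)

end Psl

section Key
variable {p : ℕ} {F : Type*} [Field F] [CharP F p]

lemma cast_ne_cast {c c' : ℕ} (hp : p.Prime) (hc : c < p) (hc' : c' < p) (hne : c ≠ c') :
    (c : F) ≠ (c' : F) := by
  intro h
  rcases lt_or_gt_of_ne hne with hlt | hlt
  · have : ((c' - c : ℕ) : F) = 0 := by
      rw [Nat.cast_sub (le_of_lt hlt), h, sub_self]
    have hdvd := (CharP.cast_eq_zero_iff F p _).mp this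
    have := Nat.le_of_dvd (by omega) hdvd
    omega
  · have : ((c - c' : ℕ) : F) = 0 := by
      rw [Nat.cast_sub (le_of_lt hlt), h, sub_self]
    have hdvd := (CharP.cast_eq_zero_iff F p _).mp this
    have := Nat.le_of_dvd (by omega) hdvd
    omega

lemma expand_X_sub_C_pow (hp : p.Prime) (α : F) (m : ℕ) :
    expand F p ((X - C (α ^ p)) ^ m) = ((X : F[X]) - C α) ^ (p * m) := by
  haveI : Fact p.Prime := ⟨hp⟩
  rw [map_pow, map_sub, expand_X, expand_C, pow_mul]
  congr 1
  rw [sub_pow_char, ← C_pow]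

lemma deriv_expand (u : F[X]) : derivative (expand F p u) = 0 := by
  rw [Polynomial.derivative_expand]
  have h : ((p : F[X]) : F[X]) = 0 := CharP.cast_eq_zero F[X] p
  rw [h, zero_mul, mul_zero]

lemma dvd_L {α : F} (c : F) {f : F[X]} {e : ℕ} (h : (X - C α) ^ (e + 1) ∣ f) :
    (X - C α) ^ e ∣ X * derivative f - C c * f := by
  obtain ⟨g, rfl⟩ := h
  rw [derivative_mul, derivative_pow, derivative_X_sub_C, mul_one]
  refine ⟨X * (C (((e : F) + 1)) * g + (X - C α) * derivative g) - C c * ((X - C α) * g), ?_⟩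
  rw [Nat.add_sub_cancel]
  push_cast
  ring

lemma term_op (u : F[X]) (c : ℕ) (a : F) :
    X * derivative (expand F p u * X ^ c) - C a * (expand F p u * X ^ c)
      = expand F p (C ((c : F) - a) * u) * X ^ c := by
  rw [derivative_mul, deriv_expand, zero_mul, zero_add, derivative_X_pow, map_mul, expand_C]
  rcases Nat.eq_zero_or_pos c with rfl | hc
  · simp only [Nat.cast_zero, zero_sub, pow_zero, mul_one]
    rw [map_neg]
    ring_nf
    simp
  · have hX : (X : F[X]) * X ^ (c - 1) = X ^ c := by
      rw [← pow_succ']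
      congr 1
      omega
    rw [map_sub]
    calc X * (expand F p u * (C ((c:F)) * X ^ (c-1))) - C a * (expand F p u * X ^ c)
        = C ((c:F)) * expand F p u * (X * X ^ (c-1)) - C a * expand F p u * X ^ c := by ring
      _ = (C ((c:F)) - C a) * expand F p u * X ^ c := by rw [hX]; ring

lemma kill (hp : p.Prime) {α : F} (hα : α ≠ 0) :
    ∀ N (S : Finset ℕ), S.card = N → S.Nonempty → (∀ c ∈ S, c < p) →
    ∀ u : ℕ → F[X], (∀ c ∈ S, eval (α ^ p) (u c) ≠ 0) →
    ¬ (X - C α) ^ N ∣ ∑ c ∈ S, expand F p (u c) * X ^ c := by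
  intro N
  induction N with
  | zero =>
    intro S hcard hne _ _ _ _
    rw [Finset.card_eq_zero] at hcard
    subst hcard
    exact absurd hne (by simp)
  | succ N ih =>
    intro S hcard hne hlt u heval hdvd
    rcases Nat.eq_zero_or_pos N with rfl | hN
    · obtain ⟨c₀, rfl⟩ := Finset.card_eq_one.mp hcard
      rw [Finset.sum_singleton, pow_one] at hdvd
      have h0 : eval α (expand F p (u c₀) * X ^ c₀) = 0 := (dvd_iff_isRoot.mp hdvd : _)
      rw [eval_mul, eval_pow, eval_X, expand_eval] at h0
      exact (mul_ne_zero (heval c₀ (mem_singleton_self c₀)) (pow_ne_zero _ hα)) h0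
    · obtain ⟨c₀, hc₀⟩ := hne
      set f := ∑ c ∈ S, expand F p (u c) * X ^ c with hf
      have hL : (X - C α) ^ N ∣ X * derivative f - C ((c₀ : F)) * f := dvd_L _ hdvd
      have hLf : X * derivative f - C ((c₀ : F)) * f
          = ∑ c ∈ S.erase c₀, expand F p (C ((c : F) - (c₀ : F)) * u c) * X ^ c := by
        rw [hf, derivative_sum, Finset.mul_sum, Finset.mul_sum, ← Finset.sum_sub_distrib]
        rw [← Finset.sum_erase_add S _ hc₀]
        have hzero : X * derivative (expand F p (u c₀) * X ^ c₀)
            - C ((c₀ : F)) * (expand F p (u c₀) * X ^ c₀) = 0 := by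
          rw [term_op, sub_self, C_0, zero_mul, map_zero, zero_mul]
        rw [hzero, add_zero]
        exact Finset.sum_congr rfl fun c _ => term_op (u c) c _
      refine ih (S.erase c₀) ?_ ?_ ?_ (fun c => C ((c : F) - (c₀ : F)) * u c) ?_ ?_
      · rw [card_erase_of_mem hc₀, hcard]; rfl
      · rw [← Finset.card_pos, card_erase_of_mem hc₀, hcard]; omega
      · exact fun c hc => hlt c (mem_of_mem_erase hc)
      · intro c hc
        rw [eval_mul, eval_C]
        exact mul_ne_zero (sub_ne_zero.mpr (cast_ne_cast hp (hlt c (mem_of_mem_erase hc))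
          (hlt c₀ hc₀) (ne_of_mem_erase hc))) (heval c (mem_of_mem_erase hc))
      · rw [← hLf]; exact hL

lemma key_lemma (hp : p.Prime) :
    ∀ d : ℕ, ∀ v : F[X], v ≠ 0 → v.natDegree ≤ d → ∀ α : F, α ≠ 0 →
    Wd p (rootMultiplicity α v) ≤ v.support.card := by
  intro d
  induction d using Nat.strong_induction_on with
  | _ d ih =>
    intro v hv hdeg α hα
    classical
    have hp2 : 1 < p := hp.one_lt
    have hp0 : 0 < p := by omega
    set t := rootMultiplicity α v with ht
    rcases Nat.eq_zero_or_pos t with ht0 | ht1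
    · rw [ht0, Wd_zero]
      exact Finset.card_pos.mpr (nonempty_support_iff.mpr hv)
    set β := α ^ p with hβ
    set vc : ℕ → F[X] := fun c => psl F p c v with hvcdef
    have hrec : ∑ r ∈ range p, expand F p (vc r) * X ^ r = v := psl_sum hp0 v
    set S' := (range p).filter (fun c => vc c ≠ 0) with hS'
    have hrec' : ∑ c ∈ S', expand F p (vc c) * X ^ c = v := by
      rw [← hrec]
      refine Finset.sum_subset (filter_subset _ _) ?_
      intro c hc hnc
      have : vc c = 0 := by
        by_contra hcc
        exact hnc (mem_filter.mpr ⟨hc, hcc⟩)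
      rw [this, map_zero, zero_mul]
    set mc : ℕ → ℕ := fun c => rootMultiplicity β (vc c) with hmc
    have hS'ne : S'.Nonempty := by
      obtain ⟨r, hr, hne⟩ := exists_psl_ne_zero hp0 hv
      exact ⟨r, mem_filter.mpr ⟨mem_range.mpr hr, hne⟩⟩
    obtain ⟨c₁, hc₁S, hc₁min⟩ := Finset.exists_min_image S' mc hS'ne
    set μ := mc c₁ with hμ
    set Smin := S'.filter (fun c => mc c = μ) with hSmin
    have hc₁Smin : c₁ ∈ Smin := mem_filter.mpr ⟨hc₁S, rfl⟩
    have hSminne : Smin.Nonempty := ⟨c₁, hc₁Smin⟩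
    set u : ℕ → F[X] := fun c => vc c /ₘ ((X - C β) ^ μ) with hu
    have hufac : ∀ c ∈ Smin, vc c = (X - C β) ^ μ * u c := by
      intro c hc
      have hmcc : mc c = μ := (mem_filter.mp hc).2
      have := pow_mul_divByMonic_rootMultiplicity_eq (vc c) β
      rw [hu]
      rw [show rootMultiplicity β (vc c) = μ from hmcc] at this
      exact this.symm
    have hueval : ∀ c ∈ Smin, eval β (u c) ≠ 0 := by
      intro c hc
      have hcnz : vc c ≠ 0 := (mem_filter.mp (mem_filter.mp hc).1).2
      have := eval_divByMonic_pow_rootMultiplicity_ne_zero β hcnz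
      rw [hu]
      rw [show rootMultiplicity β (vc c) = μ from (mem_filter.mp hc).2] at this
      exact this
    have hdvd1 : ∀ c ∈ S', (X - C α) ^ (p * mc c) ∣ expand F p (vc c) * X ^ c := by
      intro c _
      have h1 : (X - C β) ^ (mc c) ∣ vc c := pow_rootMultiplicity_dvd _ _
      have h2 := map_dvd (expand F p : F[X] →+* F[X]) h1
      rw [show (expand F p : F[X] →+* F[X]) ((X - C β) ^ mc c)
        = ((X : F[X]) - C α) ^ (p * mc c) from expand_X_sub_C_pow hp α (mc c)] at h2
      exact h2.mul_right _
    have hclaim1 : p * μ ≤ t := by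
      rw [ht]
      refine (le_rootMultiplicity_iff hv).mpr ?_
      rw [← hrec']
      exact Finset.dvd_sum fun c hc =>
        dvd_trans (pow_dvd_pow _ (Nat.mul_le_mul_left p (hc₁min c hc))) (hdvd1 c hc)
    have hcardle : Smin.card ≤ p := by
      calc Smin.card ≤ S'.card := card_le_card (filter_subset _ _)
        _ ≤ (range p).card := card_le_card (filter_subset _ _)
        _ = p := card_range p
    have hclaim2 : t < p * μ + Smin.card := by
      by_contra hcon
      push_neg at hcon
      have hE : (X - C α) ^ (p * μ + Smin.card) ∣ v :=
        dvd_trans (pow_dvd_pow _ hcon) (pow_rootMultiplicity_dvd v α)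
      have hsplit : (∑ c ∈ Smin, expand F p (vc c) * X ^ c)
          + (∑ c ∈ S'.filter (fun c => ¬ mc c = μ), expand F p (vc c) * X ^ c) = v := by
        rw [Finset.sum_filter_add_sum_filter_not S' (fun c => mc c = μ)
          (fun c => expand F p (vc c) * X ^ c)]
        exact hrec'
      have hB : (X - C α) ^ (p * μ + Smin.card)
          ∣ ∑ c ∈ S'.filter (fun c => ¬ mc c = μ), expand F p (vc c) * X ^ c := by
        refine Finset.dvd_sum fun c hc => ?_
        obtain ⟨hcS, hcne⟩ := mem_filter.mp hc
        have h1 : μ + 1 ≤ mc c := by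
          have := hc₁min c hcS
          omega
        have h2 : p * μ + Smin.card ≤ p * mc c := by
          have := Nat.mul_le_mul_left p h1
          rw [Nat.mul_add, mul_one] at this
          omega
        exact dvd_trans (pow_dvd_pow _ h2) (hdvd1 c hcS)
      have hA : (X - C α) ^ (p * μ + Smin.card)
          ∣ ∑ c ∈ Smin, expand F p (vc c) * X ^ c := by
        have := dvd_sub hE hB
        rw [← hsplit, add_sub_cancel_right] at this
        exact this
      have hAfac : ∑ c ∈ Smin, expand F p (vc c) * X ^ c
          = (X - C α) ^ (p * μ) * ∑ c ∈ Smin, expand F p (u c) * X ^ c := by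
        rw [Finset.mul_sum]
        refine Finset.sum_congr rfl fun c hc => ?_
        rw [hufac c hc, map_mul,
          show (expand F p) ((X - C β) ^ μ) = ((X : F[X]) - C α) ^ (p * μ) from
            expand_X_sub_C_pow hp α μ]
        ring
      have hcancel : (X - C α) ^ Smin.card ∣ ∑ c ∈ Smin, expand F p (u c) * X ^ c := by
        obtain ⟨w, hw⟩ := hA
        rw [hAfac, pow_add, mul_assoc] at hw
        exact ⟨w, mul_left_cancel₀ (pow_ne_zero _ (X_sub_C_ne_zero α)) hw⟩
      exact kill hp hα Smin.card Smin rfl hSminne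
        (fun c hc => mem_range.mp (mem_filter.mp (mem_filter.mp hc).1).1) u hueval hcancel
    have hμt : μ = t / p := by
      have h1 := Nat.div_add_mod t p
      have h2 : t < p * μ + p := by omega
      have h3 : t / p = μ := by
        refine Nat.div_eq_of_lt_le (by rwa [mul_comm]) ?_
        rw [Nat.succ_mul, mul_comm μ p]
        omega
      omega
    have hβ0 : β ≠ 0 := pow_ne_zero p hα
    rw [hμt] at hclaim2
    have hdm := Nat.div_add_mod t p
    have hrp : t % p + 1 ≤ Smin.card := by omega
    have hdegv1 : 1 ≤ v.natDegree := by
      have hd := pow_rootMultiplicity_dvd v α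
      have h5 := natDegree_le_of_dvd hd hv
      rw [natDegree_pow, natDegree_X_sub_C, mul_one] at h5
      omega
    have hwt : ∀ c ∈ Smin, Wd p μ ≤ (vc c).support.card := by
      intro c hc
      have hcnz : vc c ≠ 0 := (mem_filter.mp (mem_filter.mp hc).1).2
      have hdg : p * (vc c).natDegree ≤ v.natDegree := psl_natDegree_le hp0 hcnz
      have h2p : 2 * (vc c).natDegree ≤ p * (vc c).natDegree :=
        Nat.mul_le_mul_right _ (by omega)
      have hdegc : (vc c).natDegree < d := by omega
      have h3 := ih (vc c).natDegree hdegc (vc c) hcnz le_rfl β hβ0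
      rw [show rootMultiplicity β (vc c) = μ from (mem_filter.mp hc).2] at h3
      exact h3
    calc Wd p t = (t % p + 1) * Wd p (t / p) := Wd_rec hp2 t
      _ ≤ Smin.card * Wd p μ := by
          rw [← hμt]
          exact Nat.mul_le_mul hrp le_rfl
      _ = ∑ _c ∈ Smin, Wd p μ := by rw [Finset.sum_const, smul_eq_mul]
      _ ≤ ∑ c ∈ Smin, (vc c).support.card := Finset.sum_le_sum hwt
      _ ≤ ∑ c ∈ range p, (vc c).support.card :=
          Finset.sum_le_sum_of_subset (subset_trans (filter_subset _ _) (filter_subset _ _))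
      _ ≤ v.support.card := psl_card_sum hp0 v

end Key

lemma digit_bound {p s k τ t i : ℕ} (hp : 1 < p) (hs : 1 ≤ s) (hk1 : 1 ≤ k) (hk2 : k ≤ s - 1)
    (hτ1 : 1 ≤ τ) (hτ2 : τ ≤ p - 1)
    (hi1 : p ^ s - p ^ (s - k) + (τ - 1) * p ^ (s - k - 1) + 1 ≤ i)
    (ht1 : i ≤ t) (ht2 : t < p ^ s) : (τ + 1) * p ^ k ≤ Wd p t := by
  set m := s - k - 1 with hm
  have hsk : s - k = m + 1 := by omega
  set M := p ^ (s - k) with hM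
  have hMm : M = p ^ m * p := by rw [hM, hsk, pow_succ]
  have hMpos : 0 < M := by positivity
  have hmpos : 0 < p ^ m := by positivity
  have hps : p ^ s = p ^ k * M := by rw [hM, ← pow_add]; congr 1; omega
  have hpk1 : 1 ≤ p ^ k := Nat.one_le_pow _ _ (by omega)
  have hsub : p ^ s - M = (p ^ k - 1) * M := by
    rw [hps, Nat.sub_mul, one_mul]
  -- bounds on t
  have htlow : (p ^ k - 1) * M + (τ - 1) * p ^ m + 1 ≤ t := by
    have h1 : (τ - 1) * p ^ (s - k - 1) = (τ - 1) * p ^ m := by rw [hm]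
    omega
  -- b = t / M = p^k - 1
  have hb : t / M = p ^ k - 1 := by
    have hlo : (p ^ k - 1) * M ≤ t := by omega
    have hhi : t < (p ^ k - 1 + 1) * M := by
      have : (p ^ k - 1 + 1) * M = p ^ k * M := by congr 1; omega
      rw [this, ← hps]
      exact ht2
    exact Nat.div_eq_of_lt_le hlo hhi
  have hdm := Nat.div_add_mod t M
  set t₁ := t % M with ht₁
  have htsplit : t = t₁ + (p ^ k - 1) * M := by
    rw [ht₁, ← hb]
    exact (Nat.mod_add_div' t M).symm
  have ht₁M : t₁ < M := Nat.mod_lt _ hMpos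
  have hWt : Wd p t = Wd p t₁ * p ^ k := by
    rw [htsplit, hM, Wd_split hp _ _ _ (by rw [← hM]; exact ht₁M), Wd_pow_sub_one hp]
  -- t₁ ≥ (τ-1) p^m + 1
  have ht₁low : (τ - 1) * p ^ m + 1 ≤ t₁ := by omega
  -- a = t₁ / p^m
  set a := t₁ / p ^ m with ha
  have hdm2 := Nat.div_add_mod t₁ (p ^ m)
  set t₂ := t₁ % p ^ m with ht₂
  have ht₂m : t₂ < p ^ m := Nat.mod_lt _ hmpos
  have hap : a < p := by
    rw [ha]
    refine Nat.div_lt_of_lt_mul ?_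
    rw [← hMm]
    exact ht₁M
  have haτ : τ - 1 ≤ a := by
    rw [ha]
    refine Nat.le_div_iff_mul_le hmpos |>.mpr ?_
    omega
  have ht₁split : t₁ = t₂ + a * p ^ m := by
    rw [ht₂, ha]
    exact (Nat.mod_add_div' t₁ (p ^ m)).symm
  have hWt₁ : Wd p t₁ = Wd p t₂ * (a + 1) := by
    rw [ht₁split, Wd_split hp _ _ _ ht₂m, Wd_lt hp hap]
  have hfin : τ + 1 ≤ Wd p t₁ := by
    rcases Nat.lt_or_ge a τ with hc | hc
    · -- a = τ - 1, so t₂ ≥ 1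
      have haeq : a = τ - 1 := by omega
      have ht₂1 : 1 ≤ t₂ := by
        have : a * p ^ m = (τ - 1) * p ^ m := by rw [haeq]
        omega
      have h2 := Wd_ge_two hp ht₂1
      rw [hWt₁]
      have : 2 * τ ≤ Wd p t₂ * (a + 1) := by
        have : τ ≤ a + 1 := by omega
        calc 2 * τ ≤ Wd p t₂ * τ := Nat.mul_le_mul_right _ h2
          _ ≤ Wd p t₂ * (a + 1) := Nat.mul_le_mul_left _ (by omega)
      omega
    · rw [hWt₁]
      have h1 := Wd_pos hp t₂
      calc τ + 1 ≤ 1 * (a + 1) := by omega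
        _ ≤ Wd p t₂ * (a + 1) := Nat.mul_le_mul_right _ h1
  rw [hWt]
  exact Nat.mul_le_mul_right _ hfin

lemma Wd_I_val {p s k τ : ℕ} (hp : 1 < p) (hs : 1 ≤ s) (hk1 : 1 ≤ k) (hk2 : k ≤ s - 1)
    (hτ1 : 1 ≤ τ) (hτ2 : τ ≤ p - 1) :
    Wd p (p ^ s - p ^ (s - k) + τ * p ^ (s - k - 1)) = (τ + 1) * p ^ k := by
  set m := s - k - 1 with hm
  have hsk : s - k = m + 1 := by omega
  have hmpos : 0 < p ^ m := by positivity
  have hps : p ^ s = p ^ k * p ^ (s - k) := by rw [← pow_add]; congr 1; omega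
  have hpk1 : 1 ≤ p ^ k := Nat.one_le_pow _ _ (by omega)
  have hsub : p ^ s - p ^ (s - k) = (p ^ k - 1) * p ^ (s - k) := by
    rw [hps, Nat.sub_mul, one_mul]
  have hI : p ^ s - p ^ (s - k) + τ * p ^ (s - k - 1)
      = (0 + τ * p ^ m) + (p ^ k - 1) * p ^ (m + 1) := by
    rw [hsub, hsk]
    simp only [Nat.add_sub_cancel]
    omega
  have hτm : 0 + τ * p ^ m < p ^ (m + 1) := by
    rw [pow_succ, zero_add]
    have h1 : τ * p ^ m ≤ (p - 1) * p ^ m := Nat.mul_le_mul_right _ (by omega)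
    have h2 : (p - 1) * p ^ m < p * p ^ m := (Nat.mul_lt_mul_right hmpos).mpr (by omega)
    rw [mul_comm (p ^ m) p]
    omega
  rw [hI, Wd_split hp (m + 1) _ _ hτm,
    Wd_split hp m 0 τ (by positivity), Wd_zero, Wd_pow_sub_one hp, one_mul,
    Wd_lt hp (by omega)]

section Assembly
variable {F : Type*} [Field F]

lemma mem_span_iff_dvd {P : F[X]} (i N : ℕ) (hiN : i ≤ N) (f : F[X]) :
    (Ideal.Quotient.mk (Ideal.span {P ^ N}) f ∈
      Ideal.span {Ideal.Quotient.mk (Ideal.span {P ^ N}) (P ^ i)}) ↔ P ^ i ∣ f := by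
  rw [Ideal.mem_span_singleton]
  constructor
  · rintro ⟨c, hc⟩
    obtain ⟨g, rfl⟩ := Ideal.Quotient.mk_surjective c
    rw [← map_mul, Ideal.Quotient.eq, Ideal.mem_span_singleton] at hc
    obtain ⟨h, hh⟩ := hc
    have hf : f = P ^ i * g + P ^ N * h := by
      have := sub_eq_iff_eq_add.mp hh
      rw [this]; ring
    rw [hf]
    exact dvd_add (Dvd.intro _ rfl) (dvd_mul_of_dvd_left (pow_dvd_pow P hiN) h)
  · rintro ⟨g, rfl⟩
    exact ⟨Ideal.Quotient.mk _ g, by rw [← map_mul]⟩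

lemma reduce {n : ℕ} (hn : 0 < n) {γ : F} (i : ℕ) {v : F[X]} (hv : v ≠ 0)
    (hdvd : ((X : F[X]) ^ n + C γ) ^ i ∣ v) :
    ∃ g : F[X], g ≠ 0 ∧ ((X : F[X]) + C γ) ^ i ∣ g ∧ g.support.card ≤ v.support.card ∧
      n * g.natDegree ≤ v.natDegree := by
  obtain ⟨h, hh⟩ := hdvd
  have hP : ((X : F[X]) ^ n + C γ) = expand F n ((X : F[X]) + C γ) := by
    rw [map_add, expand_X, expand_C]
  have hveq : v = ∑ r' ∈ range n,
      expand F n (((X : F[X]) + C γ) ^ i * psl F n r' h) * X ^ r' := by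
    conv_lhs => rw [hh, ← psl_sum hn h, hP]
    rw [Finset.mul_sum]
    refine Finset.sum_congr rfl fun r' _ => ?_
    rw [map_mul, map_pow]
    ring
  obtain ⟨r, hr, hne⟩ := exists_psl_ne_zero hn hv
  have hcomp : psl F n r v = ((X : F[X]) + C γ) ^ i * psl F n r h := by
    ext k
    rw [psl_coeff hn]
    conv_lhs => rw [hveq]
    exact sum_expand_coeff hn (fun r' => ((X : F[X]) + C γ) ^ i * psl F n r' h) k hr
  exact ⟨psl F n r v, hne, Dvd.intro _ hcomp.symm, psl_card_le hn v r,
    psl_natDegree_le hn hne⟩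

end Assembly

theorem stmt_17 (p s n : ℕ) (hp : p.Prime) (hs : 1 ≤ s) (hn : 1 ≤ n)
    (F : Type*) [Field F] [Fintype F] [CharP F p]
    (γ : F) (hγ : γ ≠ 0) (hirr : Irreducible ((X : F[X]) ^ n + C γ))
    (k τ i : ℕ) (hk1 : 1 ≤ k) (hk2 : k ≤ s - 1) (hτ1 : 1 ≤ τ) (hτ2 : τ ≤ p - 1)
    (hi1 : p ^ s - p ^ (s - k) + (τ - 1) * p ^ (s - k - 1) + 1 ≤ i)
    (hi2 : i ≤ p ^ s - p ^ (s - k) + τ * p ^ (s - k - 1)) :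
    sInf {w : ℕ | ∃ f : F[X], f ≠ 0 ∧ f.natDegree < n * p ^ s ∧
        Ideal.Quotient.mk (Ideal.span {((X : F[X]) ^ n + C γ) ^ p ^ s}) f ∈
          Ideal.span {Ideal.Quotient.mk (Ideal.span {((X : F[X]) ^ n + C γ) ^ p ^ s})
            (((X : F[X]) ^ n + C γ) ^ i)} ∧
        w = f.support.card} = (τ + 1) * p ^ k := by
  have hp1 : 1 < p := hp.one_lt
  have hn0 : 0 < n := hn
  set P : F[X] := (X : F[X]) ^ n + C γ with hPdef
  set I : ℕ := p ^ s - p ^ (s - k) + τ * p ^ (s - k - 1) with hI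
  -- basic arithmetic
  have hm1 : 0 < p ^ (s - k - 1) := by positivity
  have hks : s - k = (s - k - 1) + 1 := by omega
  have hM : p ^ (s - k) = p ^ (s - k - 1) * p := by rw [← pow_succ, ← hks]
  have hMs : p ^ (s - k) ≤ p ^ s := Nat.pow_le_pow_right (by omega) (by omega)
  have hIlt : I < p ^ s := by
    rw [hI]
    have e1 : p ^ (s - k) = p * p ^ (s - k - 1) := by rw [← pow_succ', ← hks]
    have e2 : τ * p ^ (s - k - 1) + p ^ (s - k - 1) ≤ p * p ^ (s - k - 1) := by
      have e3 : (τ + 1) * p ^ (s - k - 1) ≤ p * p ^ (s - k - 1) :=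
        Nat.mul_le_mul_right _ (by omega)
      rw [Nat.add_mul, one_mul] at e3
      omega
    omega
  have hiI : i ≤ I := hi2
  have hips : i ≤ p ^ s := by omega
  have hPmonic : P.Monic := monic_X_pow_add_C γ (by omega)
  have hPne : P ≠ 0 := hPmonic.ne_zero
  have hPdeg : P.natDegree = n := natDegree_X_pow_add_C
  -- the witness
  have hmem : (τ + 1) * p ^ k ∈ {w : ℕ | ∃ f : F[X], f ≠ 0 ∧ f.natDegree < n * p ^ s ∧
      Ideal.Quotient.mk (Ideal.span {P ^ p ^ s}) f ∈
        Ideal.span {Ideal.Quotient.mk (Ideal.span {P ^ p ^ s}) (P ^ i)} ∧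
      w = f.support.card} := by
    refine ⟨P ^ I, pow_ne_zero _ hPne, ?_, ?_, ?_⟩
    · rw [natDegree_pow, hPdeg]
      calc I * n < p ^ s * n := (Nat.mul_lt_mul_right hn0).mpr hIlt
        _ = n * p ^ s := mul_comm _ _
    · exact (mem_span_iff_dvd i (p ^ s) hips (P ^ I)).mpr (pow_dvd_pow P hiI)
    · have hexp : P ^ I = expand F n (((X : F[X]) + C γ) ^ I) := by
        rw [map_pow, map_add, expand_X, expand_C]
      rw [hexp, support_expand_card hn0, wt_X_add_C_pow hp hγ, hI,
        Wd_I_val hp1 hs hk1 hk2 hτ1 hτ2]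
  refine le_antisymm (Nat.sInf_le hmem) (le_csInf ⟨_, hmem⟩ ?_)
  rintro w ⟨f, hf0, hfdeg, hfmem, rfl⟩
  rw [mem_span_iff_dvd i (p ^ s) hips f] at hfmem
  obtain ⟨g, hg0, hgdvd, hgcard, hgdeg⟩ := reduce hn0 i hf0 hfmem
  set α : F := -γ with hα
  have hαne : α ≠ 0 := neg_ne_zero.mpr hγ
  have hXC : (X : F[X]) + C γ = X - C α := by
    rw [hα, map_neg, sub_neg_eq_add]
  set t := rootMultiplicity α g with ht
  have hit : i ≤ t := by
    rw [ht]
    refine (le_rootMultiplicity_iff hg0).mpr ?_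
    rw [← hXC]
    exact hgdvd
  have htdeg : t ≤ g.natDegree := by
    have hd := pow_rootMultiplicity_dvd g α
    have h5 := natDegree_le_of_dvd hd hg0
    rwa [natDegree_pow, natDegree_X_sub_C, mul_one] at h5
  have hgps : g.natDegree < p ^ s := by
    have : n * g.natDegree < n * p ^ s := by omega
    exact Nat.lt_of_mul_lt_mul_left this
  have hkey := key_lemma hp g.natDegree g hg0 le_rfl α hαne
  have hdig := digit_bound hp1 hs hk1 hk2 hτ1 hτ2 hi1 hit (by omega)
  rw [← ht] at hkey
  omega
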